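/- Fix g ≥ 1 and let P(x) = ∏_{k=1}^g (1 - α_k^{-1} x). For n ≥ 0 define the rational function f(z_1,…,z_n) = ∏_{i=1}^n (P(1)/P(z_i)) · Σ_{σ∈S_n} σ{ ∏_{i>j} [1/(1 - z_i/z_j) · ∏_{k=1}^g (1 - α_k^{-1} z_i/z_j)/(1 - q α_k^{-1} z_i/z_j)] · ∏_{i>j+1} (1 - q z_i/z_j) · ∏_{i≥2} (1 - z_i) }, where σ acts by permuting the variables z_1,…,z_n. Then f(1, z_1, …, z_n) = f(q z_1, …, q z_n). -/

import Mathlib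

open Finset

/-- `P(x) = ∏_{k=1}^g (1 - α_k⁻¹ x)`. -/
noncomputable def Pfun {K : Type*} [Field K] {g : ℕ} (α : Fin g → K) (x : K) : K :=
  ∏ k, (1 - (α k)⁻¹ * x)

/-- The symmetrized rational function
`f(z_1,…,z_n) = ∏_i P(1)/P(z_i) · Σ_{σ∈S_n} σ{ ∏_{i>j} [1/(1-z_i/z_j) ·
  ∏_k (1-α_k⁻¹ z_i/z_j)/(1-q α_k⁻¹ z_i/z_j)] · ∏_{i>j+1}(1-q z_i/z_j) · ∏_{i≥2}(1-z_i) }`. -/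
noncomputable def ffun {K : Type*} [Field K] {g : ℕ} (q : K) (α : Fin g → K)
    {n : ℕ} (z : Fin n → K) : K :=
  (∏ i, Pfun α 1 / Pfun α (z i)) *
    ∑ σ : Equiv.Perm (Fin n),
      (∏ p ∈ Finset.univ.filter (fun p : Fin n × Fin n => p.2 < p.1),
          ((1 - z (σ p.1) / z (σ p.2))⁻¹ *
            ∏ k, (1 - (α k)⁻¹ * (z (σ p.1) / z (σ p.2))) /
              (1 - q * (α k)⁻¹ * (z (σ p.1) / z (σ p.2))))) *
        (∏ p ∈ Finset.univ.filter (fun p : Fin n × Fin n => (p.2 : ℕ) + 1 < (p.1 : ℕ)),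
          (1 - q * (z (σ p.1) / z (σ p.2)))) *
        ∏ i ∈ Finset.univ.filter (fun i : Fin n => 0 < (i : ℕ)), (1 - z (σ i))

/-- The field of rational functions `ℚ(q, α_1, …, α_g, z_1, …, z_n)`. -/
noncomputable abbrev KF (g n : ℕ) : Type :=
  FractionRing (MvPolynomial (Option (Fin g ⊕ Fin n)) ℚ)

noncomputable def qV (g n : ℕ) : KF g n :=
  algebraMap (MvPolynomial (Option (Fin g ⊕ Fin n)) ℚ) (KF g n) (MvPolynomial.X none)

noncomputable def αV (g n : ℕ) (k : Fin g) : KF g n :=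
  algebraMap (MvPolynomial (Option (Fin g ⊕ Fin n)) ℚ) (KF g n)
    (MvPolynomial.X (some (Sum.inl k)))

noncomputable def zV (g n : ℕ) (i : Fin n) : KF g n :=
  algebraMap (MvPolynomial (Option (Fin g ⊕ Fin n)) ℚ) (KF g n)
    (MvPolynomial.X (some (Sum.inr i)))

section helpers
variable {M : Type*} [CommMonoid M] {n : ℕ}

lemma split_lt (f : Fin (n+1) × Fin (n+1) → M) :
    ∏ p ∈ univ.filter (fun p : Fin (n+1) × Fin (n+1) => p.2 < p.1), f p
      = (∏ i : Fin n, f (i.succ, 0)) *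
        ∏ p ∈ univ.filter (fun p : Fin n × Fin n => p.2 < p.1), f (p.1.succ, p.2.succ) := by
  rw [Finset.prod_filter, Finset.prod_filter, Fintype.prod_prod_type, Fintype.prod_prod_type]
  rw [Fin.prod_univ_succ]
  simp [Fin.prod_univ_succ, Fin.succ_lt_succ_iff, Finset.prod_mul_distrib]

lemma split_nat (f : Fin (n+1) × Fin (n+1) → M) :
    ∏ p ∈ univ.filter (fun p : Fin (n+1) × Fin (n+1) => (p.2:ℕ)+1 < (p.1:ℕ)), f p
      = (∏ i ∈ univ.filter (fun i : Fin n => 0 < (i:ℕ)), f (i.succ, 0)) *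
        ∏ p ∈ univ.filter (fun p : Fin n × Fin n => (p.2:ℕ)+1 < (p.1:ℕ)), f (p.1.succ, p.2.succ) := by
  rw [Finset.prod_filter, Finset.prod_filter, Finset.prod_filter, Fintype.prod_prod_type,
    Fintype.prod_prod_type]
  rw [Fin.prod_univ_succ]
  simp only [Fin.prod_univ_succ, Finset.prod_mul_distrib, Nat.succ_lt_succ_iff, Fin.val_zero,
    Fin.val_succ, Nat.not_lt_zero, if_false, Finset.prod_const_one, one_mul, Nat.lt_irrefl,
    Nat.zero_add, Nat.lt_succ_iff, Nat.succ_le_iff, Nat.add_lt_add_iff_right]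
  rfl

lemma split_pos (f : Fin (n+1) → M) :
    ∏ i ∈ univ.filter (fun i : Fin (n+1) => 0 < (i:ℕ)), f i = ∏ i : Fin n, f i.succ := by
  rw [Finset.prod_filter, Fin.prod_univ_succ]
  simp

end helpers

section key
variable {K : Type*} [Field K] {g n : ℕ}

set_option maxHeartbeats 2000000 in
lemma aux (p a b c A S B : K) (ha : a ≠ 0) (hb : b ≠ 0) (hc : c ≠ 0) :
    p / a * (c⁻¹ * (a / b) * A * (S * B) * c) = p / b * (A * B * S) := by
  field_simp

lemma key (q : K) (α : Fin g → K) (z : Fin n → K)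
    (hq : q ≠ 0) (hz0 : ∀ i, z i ≠ 0) (hz1 : ∀ i, (1:K) - z i ≠ 0)
    (hP : ∀ i, Pfun α (z i) ≠ 0) (hPq : ∀ i, Pfun α (q * z i) ≠ 0)
    (hP1 : Pfun α (1:K) ≠ 0) :
    ffun q α (Fin.cons 1 z) = ffun q α (fun i => q * z i) := by
  unfold ffun
  rw [← Equiv.sum_comp (Equiv.Perm.decomposeFin.symm :
        (Fin (n+1) × Equiv.Perm (Fin n)) ≃ Equiv.Perm (Fin (n+1)))]
  rw [Fintype.sum_prod_type]
  rw [Fintype.sum_eq_single (0 : Fin (n+1)) ?vanish]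
  case vanish =>
    intro p hp
    refine Finset.sum_eq_zero fun e _ => ?_
    set σ := Equiv.Perm.decomposeFin.symm (p, e) with hσ
    have h0 : σ⁻¹ 0 ≠ 0 := by
      intro h
      apply hp
      have := congrArg σ h
      simpa [σ, Equiv.Perm.decomposeFin_symm_apply_zero] using this.symm
    have hmem : σ⁻¹ 0 ∈ univ.filter (fun i : Fin (n+1) => 0 < (i:ℕ)) := by
      simp only [mem_filter, mem_univ, true_and]
      exact Nat.pos_of_ne_zero (fun h => h0 (Fin.ext h))
    have hzero : (1 : K) - (Fin.cons 1 z : Fin (n+1) → K) (σ (σ⁻¹ 0)) = 0 := by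
      simp
    rw [Finset.prod_eq_zero hmem hzero, mul_zero]
  have hrat : ∀ a b : K, q * a / (q * b) = a / b := fun a b => mul_div_mul_left a b hq
  simp only [hrat]
  rw [Finset.mul_sum, Finset.mul_sum]
  refine Finset.sum_congr rfl fun e _ => ?_
  rw [split_lt, split_nat, split_pos]
  simp only [Equiv.Perm.decomposeFin_symm_apply_zero, Equiv.Perm.decomposeFin_symm_apply_succ,
    Equiv.swap_self, Equiv.refl_apply, Fin.cons_zero, Fin.cons_succ, div_one]
  have hPP : ∀ x : K, (∏ k : Fin g, (1 - (α k)⁻¹ * x) / (1 - q * (α k)⁻¹ * x))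
      = Pfun α x / Pfun α (q * x) := by
    intro x
    rw [Finset.prod_div_distrib]
    unfold Pfun
    congr 1
    exact Finset.prod_congr rfl fun k _ => by ring_nf
  simp only [hPP]
  rw [Finset.prod_mul_distrib]
  have eD1 : (∏ x : Fin n, (1 - z (e x))⁻¹) = (∏ i, (1 - z i))⁻¹ := by
    rw [← Finset.prod_inv_distrib]; exact Equiv.prod_comp e (fun i => ((1:K) - z i)⁻¹)
  have eD2 : (∏ x : Fin n, Pfun α (z (e x)) / Pfun α (q * z (e x)))
      = (∏ i, Pfun α (z i)) / ∏ i, Pfun α (q * z i) := by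
    rw [Finset.prod_div_distrib, Equiv.prod_comp e (fun i => Pfun α (z i)),
      Equiv.prod_comp e (fun i => Pfun α (q * z i))]
  have eC : (∏ x : Fin n, (1 - z (e x))) = ∏ i, (1 - z i) := Equiv.prod_comp e (fun i => (1:K) - z i)
  have ePRE1 : ∏ i : Fin (n+1), Pfun α 1 / Pfun α ((Fin.cons 1 z : Fin (n+1) → K) i)
      = (∏ _i : Fin n, Pfun α 1) / ∏ i, Pfun α (z i) := by
    rw [Fin.prod_univ_succ]
    simp [div_self hP1, Finset.prod_div_distrib]
  have ePRE2 : (∏ i : Fin n, Pfun α 1 / Pfun α (q * z i))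
      = (∏ _i : Fin n, Pfun α 1) / ∏ i, Pfun α (q * z i) := Finset.prod_div_distrib _ _
  rw [ePRE1, ePRE2, eD1, eD2, eC]
  have ha : (∏ i, Pfun α (z i)) ≠ 0 := Finset.prod_ne_zero_iff.mpr fun i _ => hP i
  have hb : (∏ i, Pfun α (q * z i)) ≠ 0 := Finset.prod_ne_zero_iff.mpr fun i _ => hPq i
  have hc : (∏ i, ((1:K) - z i)) ≠ 0 := Finset.prod_ne_zero_iff.mpr fun i _ => hz1 i
  exact aux _ _ _ _ _ _ _ ha hb hc

lemma one_sub_inv_mul_ne (a x : K) (ha : a ≠ 0) (h : x ≠ a) : 1 - a⁻¹ * x ≠ 0 := by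
  intro h0
  apply h
  have h1 : a⁻¹ * x = 1 := by linear_combination -h0
  field_simp at h1
  exact h1

end key

/-- `f(1, z_1, …, z_n) = f(q z_1, …, q z_n)` in
`ℚ(q, α_1, …, α_g, z_1, …, z_n)`, for `g ≥ 1`. -/
theorem ffun_one_cons (g n : ℕ) (hg : 1 ≤ g) :
    ffun (qV g n) (αV g n) (Fin.cons 1 (zV g n)) =
      ffun (qV g n) (αV g n) (fun i => qV g n * zV g n i) := by
  classical
  have hinj : Function.Injective
      (algebraMap (MvPolynomial (Option (Fin g ⊕ Fin n)) ℚ) (KF g n)) :=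
    IsFractionRing.injective _ _
  have base : ∀ (f h : MvPolynomial (Option (Fin g ⊕ Fin n)) ℚ)
      (v : Option (Fin g ⊕ Fin n) → ℚ), MvPolynomial.eval v f ≠ MvPolynomial.eval v h →
      algebraMap _ (KF g n) f ≠ algebraMap _ (KF g n) h :=
    fun f h v hv he => hv (congrArg (MvPolynomial.eval v) (hinj he))
  have hq : qV g n ≠ 0 := by
    have h := base (MvPolynomial.X none) 0 (fun _ => 1) (by simp)
    rw [map_zero] at h; exact h
  have hα : ∀ k, αV g n k ≠ 0 := fun k => by
    have h := base (MvPolynomial.X (some (Sum.inl k))) 0 (fun _ => 1) (by simp)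
    rw [map_zero] at h; exact h
  have hz0 : ∀ i, zV g n i ≠ 0 := fun i => by
    have h := base (MvPolynomial.X (some (Sum.inr i))) 0 (fun _ => 1) (by simp)
    rw [map_zero] at h; exact h
  have hz1 : ∀ i, (1 : KF g n) - zV g n i ≠ 0 := fun i => by
    have h := base 1 (MvPolynomial.X (some (Sum.inr i))) (fun _ => 0) (by simp)
    rw [map_one] at h
    exact sub_ne_zero.mpr h
  have hzα : ∀ i k, zV g n i ≠ αV g n k := fun i k =>
    base _ _ (fun s => if s = some (Sum.inl k) then 1 else 0) (by simp)
  have hqzα : ∀ i k, qV g n * zV g n i ≠ αV g n k := fun i k => by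
    have : qV g n * zV g n i = algebraMap (MvPolynomial (Option (Fin g ⊕ Fin n)) ℚ) (KF g n)
        (MvPolynomial.X none * MvPolynomial.X (some (Sum.inr i))) := by
      rw [map_mul]; rfl
    rw [this]
    exact base _ _ (fun s => if s = some (Sum.inl k) then 1 else 0) (by simp)
  have h1α : ∀ k, (1 : KF g n) ≠ αV g n k := fun k => by
    have h := base 1 (MvPolynomial.X (some (Sum.inl k))) (fun _ => 0) (by simp)
    rw [map_one] at h; exact h
  have hP : ∀ i, Pfun (αV g n) (zV g n i) ≠ 0 := fun i =>
    Finset.prod_ne_zero_iff.mpr fun k _ => one_sub_inv_mul_ne _ _ (hα k) (hzα i k)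
  have hPq : ∀ i, Pfun (αV g n) (qV g n * zV g n i) ≠ 0 := fun i =>
    Finset.prod_ne_zero_iff.mpr fun k _ => one_sub_inv_mul_ne _ _ (hα k) (hqzα i k)
  have hP1 : Pfun (αV g n) (1 : KF g n) ≠ 0 :=
    Finset.prod_ne_zero_iff.mpr fun k _ => one_sub_inv_mul_ne _ _ (hα k) (h1α k)
  exact key _ _ _ hq hz0 hz1 hP hPq hP1
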